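/- arXiv:1206.4770 — 3 statements merged into one kernel-verified Lean document; each statement's English description precedes it below -/
import Mathlib

section
/- Let (p_x) and (q_x) be sequences in (0,1) with limsup_{x→∞} p_x/q_x < 1 and liminf_{x→∞} q_x > 0. Then there exist z > 1, ρ ∈ (0,1), and x_0 such that for all x > x_0, p_x(z-1) + q_x(1/z - 1) + 1 ≤ ρ. -/
open Filter

theorem stmt_8 (p q : ℕ → ℝ)
    (hp : ∀ x, p x ∈ Set.Ioo (0 : ℝ) 1) (hq : ∀ x, q x ∈ Set.Ioo (0 : ℝ) 1)
    (hlimsup : limsup (fun x => p x / q x) atTop < 1)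
    (hliminf : 0 < liminf q atTop) :
    ∃ z : ℝ, 1 < z ∧ ∃ ρ ∈ Set.Ioo (0 : ℝ) 1, ∃ x₀ : ℕ,
      ∀ x, x₀ < x → p x * (z - 1) + q x * (1 / z - 1) + 1 ≤ ρ := by
  set L := liminf q atTop with hL
  -- q is bounded above by 1
  have hqb : IsBoundedUnder (· ≥ ·) atTop q :=
    isBoundedUnder_of ⟨0, fun x => (hq x).1.le⟩
  have hhalf : L / 2 < L := by linarith
  have hev1 : ∀ᶠ x in atTop, L / 2 < q x := eventually_lt_of_lt_liminf hhalf hqb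
  have hL2pos : 0 < L / 2 := by linarith
  -- p/q is bounded above eventually
  have hbdd : IsBoundedUnder (· ≤ ·) atTop (fun x => p x / q x) := by
    apply isBoundedUnder_of_eventually_le (a := 2 / L)
    filter_upwards [hev1] with x hx
    have hq0 : 0 < q x := (hq x).1
    have : p x / q x ≤ 1 / (L / 2) := by
      apply div_le_div₀ (by norm_num) (hp x).2.le hL2pos hx.le
    simpa [one_div, div_div_eq_mul_div] using this.trans_eq (by ring)
  set c₀ := limsup (fun x => p x / q x) atTop with hc₀
  set c : ℝ := (max c₀ 0 + 1) / 2 with hc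
  have hc0 : 0 < c := by
    have : (0:ℝ) ≤ max c₀ 0 := le_max_right _ _
    simp only [hc]; linarith
  have hc1 : c < 1 := by
    have : max c₀ 0 < 1 := max_lt hlimsup one_pos
    simp only [hc]; linarith
  have hcgt : c₀ < c := by
    have : c₀ ≤ max c₀ 0 := le_max_left _ _
    have h1 : max c₀ 0 < 1 := max_lt hlimsup one_pos
    simp only [hc]; linarith
  have hev2 : ∀ᶠ x in atTop, p x / q x < c := eventually_lt_of_limsup_lt hcgt hbdd
  set δ : ℝ := min (L / 2) (1 / 2) with hδ
  have hδpos : 0 < δ := lt_min hL2pos (by norm_num)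
  have hδle1 : δ ≤ 1 := (min_le_right _ _).trans (by norm_num)
  have hev3 : ∀ᶠ x in atTop, δ < q x := by
    filter_upwards [hev1] with x hx
    exact lt_of_le_of_lt (min_le_left _ _) hx
  set z : ℝ := (1 + 1 / c) / 2 with hz
  have hcinv : 1 < 1 / c := by rw [lt_div_iff₀ hc0]; linarith
  have hz1 : 1 < z := by simp only [hz]; linarith
  have hz0 : 0 < z := by linarith
  have hzinv : 0 < 1 / z := by positivity
  have hzz : z * (1 / z) = 1 := mul_one_div_cancel (ne_of_gt hz0)
  have hcz : c * z < 1 := by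
    have : z < 1 / c := by simp only [hz]; linarith
    calc c * z < c * (1 / c) := by nlinarith
    _ = 1 := mul_one_div_cancel (ne_of_gt hc0)
  set f : ℝ := c * (z - 1) + (1 / z - 1) with hf
  have hfneg : f < 0 := by
    have h1 : c * (z - 1) * z < (z - 1) := by nlinarith
    simp only [hf]
    nlinarith
  have hfgt : -1 < f := by
    have : 0 ≤ c * (z - 1) := by nlinarith
    simp only [hf]; nlinarith
  refine ⟨z, hz1, 1 + δ * f, ⟨?_, ?_⟩, ?_⟩
  · nlinarith
  · nlinarith
  · obtain ⟨x₀, hx₀⟩ := eventually_atTop.mp (hev2.and hev3)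
    refine ⟨x₀, fun x hx => ?_⟩
    obtain ⟨h2, h3⟩ := hx₀ x hx.le
    have hq0 : 0 < q x := (hq x).1
    have hpq : p x < c * q x := (div_lt_iff₀ hq0).mp h2
    have hqf : q x * f ≤ δ * f := mul_le_mul_of_nonpos_right h3.le hfneg.le
    have hpz : p x * (z - 1) ≤ c * q x * (z - 1) :=
      mul_le_mul_of_nonneg_right hpq.le (by linarith)
    have hexp : q x * f = c * q x * (z - 1) + q x * (1 / z - 1) := by
      simp only [hf]; ring
    have key : p x * (z - 1) + q x * (1 / z - 1) ≤ δ * f := by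
      calc p x * (z - 1) + q x * (1 / z - 1)
          ≤ c * q x * (z - 1) + q x * (1 / z - 1) := by linarith
        _ = q x * f := hexp.symm
        _ ≤ δ * f := hqf
    linarith
end

section
/- With μ_i := ∑_{x≥i} (a_x + b_{x-1}) and the normalized indicators h_i(x) = (1{x≥i} - μ_i)/√(μ_i(1-μ_i)), one has (E[Var(h_i(X)|Y)])^{-1} = (1-μ_i)·[ (∑_{x≥i}(a_x+b_x))/a_{i-1} + (∑_{x≥i}(a_x+b_x))/b_{i-1} + b_{i-1}/a_{i-1} + 1 ] for i ≥ 2. -/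
theorem stmt_14 (a b : ℕ → ℝ) (ha : ∀ i, 1 ≤ i → 0 < a i) (hb : ∀ i, 1 ≤ i → 0 < b i)
    (hb0 : b 0 = 0) (hsa : Summable a) (hsb : Summable b)
    (hsum : (∑' i : ℕ, a (i + 1)) + ∑' i : ℕ, b (i + 1) = 1)
    (i : ℕ) (hi : 2 ≤ i)
    (μ T : ℝ)
    (hμ : μ = ∑' n : ℕ, (a (i + n) + b (i + n - 1)))  -- μ_i = ∑_{x ≥ i} (a_x + b_{x-1})
    (hT : T = ∑' n : ℕ, (a (i + n) + b (i + n)))      -- T_i = ∑_{x ≥ i} (a_x + b_x)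
    (hμ0 : 0 < μ) (hμ1 : μ < 1) :
    -- E[Var(h_i(X)|Y)] = (μ(1-μ))⁻¹ · a_{i-1} b_{i-1}/(a_{i-1}+b_{i-1}); its inverse:
    (a (i - 1) * b (i - 1) / (a (i - 1) + b (i - 1)) / (μ * (1 - μ)))⁻¹ =
      (1 - μ) * (T / a (i - 1) + T / b (i - 1) + b (i - 1) / a (i - 1) + 1) := by
  have ha' := ha (i - 1) (by omega)
  have hb' := hb (i - 1) (by omega)
  have hab : 0 < a (i - 1) + b (i - 1) := by linarith
  have hsa' : Summable (fun n => a (i + n)) := by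
    have := (summable_nat_add_iff i).mpr hsa
    simpa [add_comm] using this
  have hsb' : Summable (fun n => b (i + n)) := by
    have := (summable_nat_add_iff i).mpr hsb
    simpa [add_comm] using this
  have hsb'' : Summable (fun n => b (i - 1 + n)) := by
    have := (summable_nat_add_iff (i - 1)).mpr hsb
    simpa [add_comm] using this
  have hμT : μ = T + b (i - 1) := by
    have h1 : μ = (∑' n : ℕ, a (i + n)) + ∑' n : ℕ, b (i - 1 + n) := by
      rw [hμ]
      rw [show (fun n : ℕ => a (i + n) + b (i + n - 1)) =
          (fun n : ℕ => a (i + n) + b (i - 1 + n)) from funext fun n => by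
            congr 2; omega]
      exact Summable.tsum_add hsa' hsb''
    have h2 : (∑' n : ℕ, b (i - 1 + n)) = b (i - 1) + ∑' n : ℕ, b (i + n) := by
      rw [Summable.tsum_eq_zero_add hsb'']
      congr 1
      exact tsum_congr fun n => by congr 1; omega
    have h3 : T = (∑' n : ℕ, a (i + n)) + ∑' n : ℕ, b (i + n) := by
      rw [hT]; exact Summable.tsum_add hsa' hsb'
    rw [h1, h2, h3]; ring
  have hμ1' : (1 : ℝ) - μ ≠ 0 := by linarith
  rw [hμT]
  field_simp
  ring
end

section
/- Let (a_i) be a strictly positive sequence with lim_{i→∞} a_i/a_{i-1} = 1 and (b_i) a nonnegative sequence. Then limsup_{i→∞} (∑_{x=i}^∞ (a_x + b_x)) / a_{i-1} = ∞. -/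
open Filter

theorem stmt_17 (a b : ℕ → ℝ) (ha : ∀ i, 0 < a i) (hb : ∀ i, 0 ≤ b i)
    (hlim : Tendsto (fun i => a i / a (i - 1)) atTop (nhds 1)) :
    limsup (fun i =>
        (∑' n : ℕ, ENNReal.ofReal (a (i + n) + b (i + n))) / ENNReal.ofReal (a (i - 1)))
      atTop = (⊤ : ENNReal) := by
  -- each ratio a(i+n)/a(i-1) tends to 1
  have hrat : ∀ n : ℕ, Tendsto (fun i => a (i + n) / a (i - 1)) atTop (nhds 1) := by
    intro n
    induction n with
    | zero => simpa using hlim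
    | succ n ih =>
      have hshift : Tendsto (fun i => a (i + n + 1) / a (i + n)) atTop (nhds 1) := by
        have := hlim.comp (tendsto_add_atTop_nat (n + 1))
        simpa [Function.comp_def, Nat.add_sub_cancel, ← add_assoc] using this
      have := hshift.mul ih
      rw [one_mul] at this
      refine this.congr (fun i => ?_)
      rw [div_mul_div_comm, mul_comm (a (i + n + 1)) (a (i + n)),
        mul_div_mul_left _ _ (ha (i + n)).ne', add_assoc]
  suffices h : Tendsto (fun i =>
      (∑' n : ℕ, ENNReal.ofReal (a (i + n) + b (i + n))) / ENNReal.ofReal (a (i - 1)))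
      atTop (nhds ⊤) from h.limsup_eq
  apply ENNReal.tendsto_nhds_top
  intro N
  -- sum of N+1 ratios tends to N+1
  have hsum : Tendsto (fun i => ∑ n ∈ Finset.range (N + 1), a (i + n) / a (i - 1))
      atTop (nhds (N + 1)) := by
    have := tendsto_finset_sum (Finset.range (N + 1)) (fun n _ => hrat n)
    simpa using this
  have hev : ∀ᶠ i in atTop, (N : ℝ) < ∑ n ∈ Finset.range (N + 1), a (i + n) / a (i - 1) :=
    hsum.eventually_const_lt (by exact_mod_cast Nat.lt_succ_self N)
  filter_upwards [hev, eventually_ge_atTop 1] with i hi _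
  have hpos : 0 < a (i - 1) := ha _
  calc (N : ENNReal) = ENNReal.ofReal N := by simp
    _ < ENNReal.ofReal (∑ n ∈ Finset.range (N + 1), a (i + n) / a (i - 1)) := by
        rw [ENNReal.ofReal_lt_ofReal_iff]
        · exact hi
        · exact lt_of_le_of_lt (Nat.cast_nonneg N) hi
    _ = ENNReal.ofReal (∑ n ∈ Finset.range (N + 1), a (i + n)) / ENNReal.ofReal (a (i - 1)) := by
        rw [← Finset.sum_div, ENNReal.ofReal_div_of_pos hpos]
    _ ≤ (∑ n ∈ Finset.range (N + 1), ENNReal.ofReal (a (i + n) + b (i + n))) /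
          ENNReal.ofReal (a (i - 1)) := by
        apply ENNReal.div_le_div_right
        rw [ENNReal.ofReal_sum_of_nonneg (fun n _ => (ha _).le)]
        exact Finset.sum_le_sum fun n _ =>
          ENNReal.ofReal_le_ofReal (le_add_of_nonneg_right (hb _))
    _ ≤ (∑' n : ℕ, ENNReal.ofReal (a (i + n) + b (i + n))) / ENNReal.ofReal (a (i - 1)) :=
        ENNReal.div_le_div_right (ENNReal.sum_le_tsum _) _
end
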